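/- Assume the appropriate regularization conditions: there are constants c_u > 0 and c_o ≥ 0 with d_k² + α r_k² ≥ c_u and d_k r_k ≤ c_o for all k = 1, …, n. Then the AM-GM bounds hold with constants δ = ½(1 + (α/ρ²)c_o²)⁻¹ and β = (1 + c_u/ρ)^{-1/2}; that is, λ_min(½(Q_R + Q_J)) ≥ ½(1 + (α/ρ²)c_o²)⁻¹ and λ_max(Q_R Q_J) ≤ (1 + c_u/ρ)⁻¹. -/

import Mathlib

open Matrix

/-- The vector in Euclidean space obtained by applying the matrix `M` to `x`
(matrix-vector multiplication, viewed as a map between Euclidean spaces). -/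
noncomputable def mulVecE {ι κ : Type} [Fintype ι] [Fintype κ] [DecidableEq κ]
    (M : Matrix ι κ ℝ) (x : EuclideanSpace ℝ κ) : EuclideanSpace ℝ ι :=
  Matrix.toEuclideanLin M x

/-- The spectral norm (Euclidean operator norm) of a matrix. -/
noncomputable def specNorm {ι κ : Type} [Fintype ι] [Fintype κ] [DecidableEq κ]
    (M : Matrix ι κ ℝ) : ℝ :=
  ‖LinearMap.toContinuousLinearMap (Matrix.toEuclideanLin M)‖


lemma eig_diag {n : ℕ} (Φ : Matrix (Fin n) (Fin n) ℝ)
    (h1 : Φᵀ * Φ = 1) (h2 : Φ * Φᵀ = 1) (e : Fin n → ℝ) (μ : ℝ)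
    (h : Module.End.HasEigenvalue (Matrix.toEuclideanLin (Φ * diagonal e * Φᵀ)) μ) :
    ∃ k, e k = μ := by
  obtain ⟨v, hv⟩ := h.exists_hasEigenvector
  have happ : Matrix.toEuclideanLin (Φ * diagonal e * Φᵀ) v = μ • v := hv.apply_eq_smul
  rw [Matrix.toEuclideanLin_apply] at happ
  set v' : Fin n → ℝ := (WithLp.equiv 2 (Fin n → ℝ)) v with hv'
  have hmv : (Φ * diagonal e * Φᵀ) *ᵥ v' = μ • v' := by
    have := congrArg (WithLp.equiv 2 (Fin n → ℝ)) happ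
    simpa [hv'] using this
  have hv0 : v' ≠ 0 := by
    intro h0
    apply hv.2
    have : v = (WithLp.equiv 2 (Fin n → ℝ)).symm v' := by simp [hv']
    rw [this, h0]; simp
  set w : Fin n → ℝ := Φᵀ *ᵥ v' with hw
  have hw0 : w ≠ 0 := by
    intro h0
    apply hv0
    have : Φ *ᵥ w = v' := by
      rw [hw, mulVec_mulVec, h2, one_mulVec]
    rw [h0] at this
    simpa using this.symm
  have hdw : diagonal e *ᵥ w = μ • w := by
    have := congrArg (fun x => Φᵀ *ᵥ x) hmv
    simp only [mulVec_mulVec, mulVec_smul] at this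
    calc diagonal e *ᵥ w = (diagonal e * Φᵀ) *ᵥ v' := by rw [hw, mulVec_mulVec]
    _ = (Φᵀ * (Φ * diagonal e * Φᵀ)) *ᵥ v' := by
        rw [show Φᵀ * (Φ * diagonal e * Φᵀ) = (Φᵀ * Φ) * (diagonal e * Φᵀ) by simp only [← Matrix.mul_assoc], h1, one_mul]
    _ = μ • w := by rw [← mulVec_mulVec]; rw [hmv]; simp [hw, mulVec_smul]
  obtain ⟨k, hk⟩ := Function.ne_iff.mp hw0
  refine ⟨k, ?_⟩
  have := congrFun hdw k
  rw [mulVec_diagonal] at this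
  simp only [Pi.smul_apply, smul_eq_mul] at this
  exact mul_right_cancel₀ hk this

/-- For source inversion with spectral filtering regularization, appropriate
regularization (constants `cu`, `co`) implies the AM-GM bounds with
`δ = ½(1 + (α/ρ²)co²)⁻¹` and `β² = (1 + cu/ρ)⁻¹`. -/
theorem stmt11 (n : ℕ) (hn : 1 ≤ n) (α ρ : ℝ) (hα : 0 < α) (hρ : 0 < ρ)
    (Φ : Matrix (Fin n) (Fin n) ℝ) (hΦ : Φᵀ * Φ = 1 ∧ Φ * Φᵀ = 1)
    (d r : Fin n → ℝ) (hd : ∀ k, 0 ≤ d k) (hr : ∀ k, 0 ≤ r k)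
    (cu co : ℝ) (hcu : 0 < cu) (hco : 0 ≤ co)
    (hunder : ∀ k, cu ≤ d k ^ 2 + α * r k ^ 2)
    (hover : ∀ k, d k * r k ≤ co)
    (QR QJ : Matrix (Fin n) (Fin n) ℝ)
    (hQR : QR = Φ * diagonal (fun k => ((α / ρ) * r k ^ 2 + 1)⁻¹) * Φᵀ)
    (hQJ : QJ = Φ * diagonal (fun k => ((1 / ρ) * d k ^ 2 + 1)⁻¹) * Φᵀ)
    :
    (∀ μ : ℝ, Module.End.HasEigenvalue
        (Matrix.toEuclideanLin ((2 : ℝ)⁻¹ • (QR + QJ))) μ →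
      (1 / 2) * (1 + (α / ρ ^ 2) * co ^ 2)⁻¹ ≤ μ) ∧
    (∀ μ : ℝ, Module.End.HasEigenvalue (Matrix.toEuclideanLin (QR * QJ)) μ →
      μ ≤ (1 + cu / ρ)⁻¹) := by
  obtain ⟨h1, h2⟩ := hΦ
  set a : Fin n → ℝ := fun k => ((α / ρ) * r k ^ 2 + 1)⁻¹ with ha
  set b : Fin n → ℝ := fun k => ((1 / ρ) * d k ^ 2 + 1)⁻¹ with hb
  have hxpos : ∀ k, 0 < (α / ρ) * r k ^ 2 + 1 := fun k => by positivity
  have hypos : ∀ k, 0 < (1 / ρ) * d k ^ 2 + 1 := fun k => by positivity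
  have hsum : (2 : ℝ)⁻¹ • (QR + QJ) =
      Φ * diagonal (fun k => (2 : ℝ)⁻¹ * (a k + b k)) * Φᵀ := by
    rw [hQR, hQJ]
    rw [show (fun k => (2 : ℝ)⁻¹ * (a k + b k)) = fun k => ((2:ℝ)⁻¹ • (a + b)) k from rfl]
    rw [show (fun k => ((2:ℝ)⁻¹ • (a + b)) k) = (2:ℝ)⁻¹ • (a + b) from rfl]
    rw [diagonal_smul, show a + b = fun k => a k + b k from rfl, ← diagonal_add]
    simp only [Matrix.mul_add, Matrix.add_mul, Matrix.mul_smul, Matrix.smul_mul]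
  have hprod : QR * QJ = Φ * diagonal (fun k => a k * b k) * Φᵀ := by
    rw [hQR, hQJ, ← diagonal_mul_diagonal]
    simp only [Matrix.mul_assoc]
    rw [show Φᵀ * (Φ * (diagonal b * Φᵀ)) = (Φᵀ * Φ) * (diagonal b * Φᵀ) by
      simp only [← Matrix.mul_assoc], h1, Matrix.one_mul]
  constructor
  · intro μ hμ
    rw [hsum] at hμ
    obtain ⟨k, hk⟩ := eig_diag Φ h1 h2 _ μ hμ
    rw [← hk]
    have hx := hxpos k; have hy := hypos k
    have hC : 0 ≤ (α / ρ ^ 2) * co ^ 2 := by positivity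
    have hP : (α / ρ) * r k ^ 2 * ((1 / ρ) * d k ^ 2) ≤ (α / ρ ^ 2) * co ^ 2 := by
      have h1' : (d k * r k) ^ 2 ≤ co ^ 2 := by
        apply sq_le_sq' _ (hover k)
        nlinarith [mul_nonneg (hd k) (hr k), hover k]
      have : (α / ρ) * r k ^ 2 * ((1 / ρ) * d k ^ 2) = (α / ρ ^ 2) * (d k * r k) ^ 2 := by
        field_simp
      rw [this]
      exact mul_le_mul_of_nonneg_left h1' (by positivity)
    simp only [ha, hb]
    set X := (α / ρ) * r k ^ 2 with hX
    set Y := (1 / ρ) * d k ^ 2 with hY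
    set C := (α / ρ ^ 2) * co ^ 2 with hCdef
    have hXn : 0 ≤ X := by positivity
    have hYn : 0 ≤ Y := by positivity
    have hCpos : (0:ℝ) < 1 + C := by linarith
    have hab : (1 + C)⁻¹ ≤ (X + 1)⁻¹ + (Y + 1)⁻¹ := by
      have hinv : (X + 1)⁻¹ + (Y + 1)⁻¹ = (X + Y + 2) / ((X + 1) * (Y + 1)) := by
        field_simp; ring
      rw [hinv, inv_eq_one_div, div_le_div_iff₀ hCpos (by positivity)]
      nlinarith [hP]
    have h2' : (1/2 : ℝ) * (1 + C)⁻¹ ≤ (1/2 : ℝ) * ((X + 1)⁻¹ + (Y + 1)⁻¹) :=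
      mul_le_mul_of_nonneg_left hab (by norm_num)
    calc (1/2 : ℝ) * (1 + C)⁻¹ ≤ (1/2 : ℝ) * ((X + 1)⁻¹ + (Y + 1)⁻¹) := h2'
    _ = (2:ℝ)⁻¹ * ((X + 1)⁻¹ + (Y + 1)⁻¹) := by norm_num
  · intro μ hμ
    rw [hprod] at hμ
    obtain ⟨k, hk⟩ := eig_diag Φ h1 h2 _ μ hμ
    rw [← hk]
    have hx := hxpos k; have hy := hypos k
    have hz : (0:ℝ) < 1 + cu / ρ := by positivity
    simp only [ha, hb]
    rw [← mul_inv]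
    apply inv_anti₀ hz
    have h1' : cu / ρ ≤ ((α / ρ) * r k ^ 2 + (1 / ρ) * d k ^ 2) := by
      rw [div_le_iff₀ hρ]
      have := hunder k
      field_simp
      nlinarith [hunder k]
    nlinarith [mul_nonneg (mul_nonneg (le_of_lt (div_pos hα hρ)) (sq_nonneg (r k)))
      (mul_nonneg (by positivity : (0:ℝ) ≤ 1/ρ) (sq_nonneg (d k)))]
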